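/- The interpretation I : T0 → T is conservative if and only if the word problem instance fails, i.e. if and only if the monoid presentation ⟨G | u_i = v_i (i < m)⟩ does not prove u = v. -/
import Mathlib


/-- Terms of the theory `T0` with three binary symbols `l`, `r`, `m`,
in context `x_1, ..., x_n`. -/
inductive Tm0 : ℕ → Type
  | var {n} : Fin n → Tm0 n
  | l {n} : Tm0 n → Tm0 n → Tm0 n
  | r {n} : Tm0 n → Tm0 n → Tm0 n
  | m {n} : Tm0 n → Tm0 n → Tm0 n

/-- Equational provability in `T0`, whose single axiom is `l(x1,x2) = r(x2,x1)`
(closed under all substitution instances and congruence). -/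
inductive Prov0 : {n : ℕ} → Tm0 n → Tm0 n → Prop
  | refl {n} (t : Tm0 n) : Prov0 t t
  | symm {n} {s t : Tm0 n} : Prov0 s t → Prov0 t s
  | trans {n} {s t w : Tm0 n} : Prov0 s t → Prov0 t w → Prov0 s w
  | congl {n} {a a' b b' : Tm0 n} : Prov0 a a' → Prov0 b b' → Prov0 (.l a b) (.l a' b')
  | congr_ {n} {a a' b b' : Tm0 n} : Prov0 a a' → Prov0 b b' → Prov0 (.r a b) (.r a' b')
  | congm {n} {a a' b b' : Tm0 n} : Prov0 a a' → Prov0 b b' → Prov0 (.m a b) (.m a' b')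
  | ax {n} (a b : Tm0 n) : Prov0 (.l a b) (.r b a)

/-- The left-to-right list of variable occurrences of a term of `T0`. -/
def varList0 {n} : Tm0 n → List (Fin n)
  | .var i => [i]
  | .l a b => varList0 a ++ varList0 b
  | .r a b => varList0 a ++ varList0 b
  | .m a b => varList0 a ++ varList0 b

/-- A term in context `x_1, ..., x_n` is linear-regular if every variable occurs exactly once. -/
def LinReg0 {n} (t : Tm0 n) : Prop := ∀ i : Fin n, (varList0 t).count i = 1

/-- Substitution of variables along a map of variables (`t(x_{σ(1)},...,x_{σ(n)})`). -/
def rename0 {n} (σ : Fin n → Fin n) : Tm0 n → Tm0 n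
  | .var i => .var (σ i)
  | .l a b => .l (rename0 σ a) (rename0 σ b)
  | .r a b => .r (rename0 σ a) (rename0 σ b)
  | .m a b => .m (rename0 σ a) (rename0 σ b)

/-- Terms of the theory `T`: unary symbols `g x` for each letter `x` of the alphabet `Fin N`,
an extra unary symbol `al` (written α), and a binary symbol `m`, in context `x_1, ..., x_n`. -/
inductive TmT (N : ℕ) : ℕ → Type
  | var {n} : Fin n → TmT N n
  | g {n} : Fin N → TmT N n → TmT N n
  | al {n} : TmT N n → TmT N n
  | m {n} : TmT N n → TmT N n → TmT N n

/-- A word `w` over the alphabet applied to a term as a composite of unary symbols. -/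
def wApp {N n : ℕ} (w : List (Fin N)) (t : TmT N n) : TmT N n :=
  w.foldr (fun x s => TmT.g x s) t

/-- Equational provability in the theory `T` with axioms `u_i(x1) = v_i(x1)` (for `i : Fin M`,
where `u_i = ur i`, `v_i = vr i`) and `m(uα(x1), x2) = m(vα(x2), x1)`, closed under
all substitution instances and congruence. -/
inductive ProvT {N : ℕ} (M : ℕ) (ur vr : Fin M → List (Fin N)) (u v : List (Fin N)) :
    {n : ℕ} → TmT N n → TmT N n → Prop
  | refl {n} (t : TmT N n) : ProvT M ur vr u v t t
  | symm {n} {s t : TmT N n} : ProvT M ur vr u v s t → ProvT M ur vr u v t s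
  | trans {n} {s t w : TmT N n} :
      ProvT M ur vr u v s t → ProvT M ur vr u v t w → ProvT M ur vr u v s w
  | congg {n} (x : Fin N) {s t : TmT N n} :
      ProvT M ur vr u v s t → ProvT M ur vr u v (.g x s) (.g x t)
  | congal {n} {s t : TmT N n} : ProvT M ur vr u v s t → ProvT M ur vr u v (.al s) (.al t)
  | congm {n} {a a' b b' : TmT N n} : ProvT M ur vr u v a a' → ProvT M ur vr u v b b' →
      ProvT M ur vr u v (.m a b) (.m a' b')
  | axu {n} (i : Fin M) (t : TmT N n) : ProvT M ur vr u v (wApp (ur i) t) (wApp (vr i) t)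
  | axm {n} (t₁ t₂ : TmT N n) :
      ProvT M ur vr u v (.m (wApp u (.al t₁)) t₂) (.m (wApp v (.al t₂)) t₁)

/-- Provability of word equations from the monoid presentation
`⟨ Fin N | ur i = vr i (i : Fin M) ⟩`: the congruence on the free monoid of words
over `Fin N` generated by the relations. -/
inductive MonProv {N M : ℕ} (ur vr : Fin M → List (Fin N)) :
    List (Fin N) → List (Fin N) → Prop
  | of (i : Fin M) : MonProv ur vr (ur i) (vr i)
  | refl (w : List (Fin N)) : MonProv ur vr w w
  | symm {a b} : MonProv ur vr a b → MonProv ur vr b a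
  | trans {a b c} : MonProv ur vr a b → MonProv ur vr b c → MonProv ur vr a c
  | mul {a b c d} : MonProv ur vr a b → MonProv ur vr c d → MonProv ur vr (a ++ c) (b ++ d)

/-- The extension `Ī` to all terms of the interpretation `I : T0 → T` given by
`l ↦ m(uα(x1),x2)`, `r ↦ m(vα(x1),x2)`, `m ↦ m(x1,x2)`. -/
def ITerm {N : ℕ} (u v : List (Fin N)) : {n : ℕ} → Tm0 n → TmT N n
  | _, .var i => .var i
  | _, .l a b => .m (wApp u (.al (ITerm u v a))) (ITerm u v b)
  | _, .r a b => .m (wApp v (.al (ITerm u v a))) (ITerm u v b)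
  | _, .m a b => .m (ITerm u v a) (ITerm u v b)

/-! ### Auxiliary development -/

/-- A `T0`-model invariant distinguishing `l` and `r`: variable list with the
arguments of `r` swapped. -/
def ev0 {n} : Tm0 n → List (Fin n)
  | .var i => [i]
  | .l a b => ev0 a ++ ev0 b
  | .r a b => ev0 b ++ ev0 a
  | .m a b => ev0 a ++ ev0 b

theorem ev0_eq {n} {s t : Tm0 n} (h : Prov0 s t) : ev0 s = ev0 t := by
  induction h <;> simp_all [ev0]

theorem wApp_append {N n : ℕ} (a b : List (Fin N)) (t : TmT N n) :
    wApp (a ++ b) t = wApp a (wApp b t) := by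
  simp [wApp, List.foldr_append]

theorem ProvT_wApp_cong {N M : ℕ} {ur vr : Fin M → List (Fin N)} {u v : List (Fin N)}
    {n : ℕ} (w : List (Fin N)) {s t : TmT N n} (h : ProvT M ur vr u v s t) :
    ProvT M ur vr u v (wApp w s) (wApp w t) := by
  induction w with
  | nil => exact h
  | cons x w ih => exact ProvT.congg x ih

theorem MonProv_ProvT {N M : ℕ} {ur vr : Fin M → List (Fin N)} {u v : List (Fin N)}
    {a b : List (Fin N)} (h : MonProv ur vr a b) {n : ℕ} (t : TmT N n) :
    ProvT M ur vr u v (wApp a t) (wApp b t) := by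
  induction h generalizing t with
  | of i => exact ProvT.axu i t
  | refl w => exact ProvT.refl _
  | symm _ ih => exact (ih t).symm
  | trans _ _ ih1 ih2 => exact (ih1 t).trans (ih2 t)
  | @mul a b c d _ _ ih1 ih2 =>
      rw [wApp_append, wApp_append]
      exact (ih1 (wApp c t)).trans (ProvT_wApp_cong b (ih2 t))

/-- Payloads for the model of the theory `T`. -/
inductive P0 (N n : ℕ) : Type
  | var : Fin n → P0 N n
  | al : List (Fin N) → P0 N n → P0 N n
  | mL : List (Fin N) → P0 N n → List (Fin N) → P0 N n → P0 N n
  | mfree : List (Fin N) → P0 N n → List (Fin N) → P0 N n → P0 N n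

section Model

variable {N M : ℕ} (ur vr : Fin M → List (Fin N))

/-- Structural equality of payloads up to `MonProv` on word components. -/
inductive PEq : {n : ℕ} → P0 N n → P0 N n → Prop
  | var {n} (i : Fin n) : PEq (.var i) (.var i)
  | al {n w w'} {p p' : P0 N n} :
      MonProv ur vr w w' → PEq p p' → PEq (.al w p) (.al w' p')
  | mL {n w1 w1' w2 w2'} {p1 p1' p2 p2' : P0 N n} :
      MonProv ur vr w1 w1' → PEq p1 p1' → MonProv ur vr w2 w2' → PEq p2 p2' →
      PEq (.mL w1 p1 w2 p2) (.mL w1' p1' w2' p2')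
  | mfree {n w1 w1' w2 w2'} {p1 p1' p2 p2' : P0 N n} :
      MonProv ur vr w1 w1' → PEq p1 p1' → MonProv ur vr w2 w2' → PEq p2 p2' →
      PEq (.mfree w1 p1 w2 p2) (.mfree w1' p1' w2' p2')

theorem PEq.refl {n} (p : P0 N n) : PEq ur vr p p := by
  induction p with
  | var i => exact .var i
  | al w p ih => exact .al (.refl w) ih
  | mL w1 p1 w2 p2 ih1 ih2 => exact .mL (.refl w1) ih1 (.refl w2) ih2
  | mfree w1 p1 w2 p2 ih1 ih2 => exact .mfree (.refl w1) ih1 (.refl w2) ih2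

theorem PEq.symm' {n} {p q : P0 N n} (h : PEq ur vr p q) : PEq ur vr q p := by
  induction h with
  | var i => exact .var i
  | al h _ ih => exact .al h.symm ih
  | mL h1 _ h2 _ ih1 ih2 => exact .mL h1.symm ih1 h2.symm ih2
  | mfree h1 _ h2 _ ih1 ih2 => exact .mfree h1.symm ih1 h2.symm ih2

theorem PEq.trans' {n} {p q r : P0 N n} (h : PEq ur vr p q) (h' : PEq ur vr q r) :
    PEq ur vr p r := by
  induction h generalizing r with
  | var i => exact h'
  | al h _ ih => cases h' with
    | al h' hp' => exact .al (h.trans h') (ih hp')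
  | mL h1 _ h2 _ ih1 ih2 => cases h' with
    | mL h1' hp1' h2' hp2' => exact .mL (h1.trans h1') (ih1 hp1') (h2.trans h2') (ih2 hp2')
  | mfree h1 _ h2 _ ih1 ih2 => cases h' with
    | mfree h1' hp1' h2' hp2' =>
        exact .mfree (h1.trans h1') (ih1 hp1') (h2.trans h2') (ih2 hp2')

variable (u v : List (Fin N))

-- The interpretation of `m` in the model.
open Classical in
noncomputable def mkm {n : ℕ} (w1 : List (Fin N)) (p1 : P0 N n) (w2 : List (Fin N))
    (p2 : P0 N n) : List (Fin N) × P0 N n :=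
  match p1 with
  | .al wa pa =>
      if MonProv ur vr w1 u then ([], .mL wa pa w2 p2)
      else if MonProv ur vr w1 v then ([], .mL w2 p2 wa pa)
      else ([], .mfree w1 (.al wa pa) w2 p2)
  | .var i => ([], .mfree w1 (.var i) w2 p2)
  | .mL a b c d => ([], .mfree w1 (.mL a b c d) w2 p2)
  | .mfree a b c d => ([], .mfree w1 (.mfree a b c d) w2 p2)

/-- Evaluation of `T`-terms into the model. -/
noncomputable def Ev {n : ℕ} : TmT N n → List (Fin N) × P0 N n
  | .var i => ([], .var i)
  | .g x t => (x :: (Ev t).1, (Ev t).2)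
  | .al t => ([], .al (Ev t).1 (Ev t).2)
  | .m s t => mkm ur vr u v (Ev s).1 (Ev s).2 (Ev t).1 (Ev t).2

theorem Ev_wApp {n : ℕ} (w : List (Fin N)) (t : TmT N n) :
    Ev ur vr u v (wApp w t) = (w ++ (Ev ur vr u v t).1, (Ev ur vr u v t).2) := by
  induction w with
  | nil => simp [wApp]
  | cons x w ih =>
      show Ev ur vr u v (.g x (wApp w t)) = _
      simp [Ev, ih]

/-- `mkm` respects the equivalence. -/
theorem mkm_resp {n : ℕ} {w1 w1' w2 w2' : List (Fin N)} {p1 p1' p2 p2' : P0 N n}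
    (h1 : MonProv ur vr w1 w1') (hp1 : PEq ur vr p1 p1')
    (h2 : MonProv ur vr w2 w2') (hp2 : PEq ur vr p2 p2') :
    MonProv ur vr (mkm ur vr u v w1 p1 w2 p2).1 (mkm ur vr u v w1' p1' w2' p2').1 ∧
    PEq ur vr (mkm ur vr u v w1 p1 w2 p2).2 (mkm ur vr u v w1' p1' w2' p2').2 := by
  cases hp1 with
  | var i => exact ⟨.refl _, .mfree h1 (.var i) h2 hp2⟩
  | @al wa wa' pa pa' ha hpa =>
      by_cases hu : MonProv ur vr w1 u
      · have hu' : MonProv ur vr w1' u := h1.symm.trans hu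
        simp only [mkm, if_pos hu, if_pos hu']
        exact ⟨.refl _, .mL ha hpa h2 hp2⟩
      · have hu' : ¬ MonProv ur vr w1' u := fun h => hu (h1.trans h)
        by_cases hv : MonProv ur vr w1 v
        · have hv' : MonProv ur vr w1' v := h1.symm.trans hv
          simp only [mkm, if_neg hu, if_neg hu', if_pos hv, if_pos hv']
          exact ⟨.refl _, .mL h2 hp2 ha hpa⟩
        · have hv' : ¬ MonProv ur vr w1' v := fun h => hv (h1.trans h)
          simp only [mkm, if_neg hu, if_neg hu', if_neg hv, if_neg hv']
          exact ⟨.refl _, .mfree h1 (.al ha hpa) h2 hp2⟩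
  | mL ha hpa hb hpb => exact ⟨.refl _, .mfree h1 (.mL ha hpa hb hpb) h2 hp2⟩
  | mfree ha hpa hb hpb => exact ⟨.refl _, .mfree h1 (.mfree ha hpa hb hpb) h2 hp2⟩

/-- Soundness: provably equal `T`-terms evaluate to equivalent model elements,
provided the word problem instance fails. -/
theorem Ev_sound (hne : ¬ MonProv ur vr u v) {n : ℕ} {s t : TmT N n}
    (h : ProvT M ur vr u v s t) :
    MonProv ur vr (Ev ur vr u v s).1 (Ev ur vr u v t).1 ∧
      PEq ur vr (Ev ur vr u v s).2 (Ev ur vr u v t).2 := by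
  induction h with
  | refl t => exact ⟨.refl _, .refl _ _ _⟩
  | symm _ ih => exact ⟨ih.1.symm, ih.2.symm' _ _⟩
  | trans _ _ ih1 ih2 => exact ⟨ih1.1.trans ih2.1, ih1.2.trans' _ _ ih2.2⟩
  | congg x _ ih =>
      exact ⟨.mul (.refl [x]) ih.1, ih.2⟩
  | congal _ ih => exact ⟨.refl _, .al ih.1 ih.2⟩
  | congm _ _ ih1 ih2 => exact mkm_resp ur vr u v ih1.1 ih1.2 ih2.1 ih2.2
  | axu i t =>
      rw [Ev_wApp, Ev_wApp]
      exact ⟨.mul (.of i) (.refl _), .refl _ _ _⟩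
  | axm t1 t2 =>
      have hu : MonProv ur vr u u := .refl u
      have hvu : ¬ MonProv ur vr v u := fun h => hne h.symm
      have hvv : MonProv ur vr v v := .refl v
      have e1 : Ev ur vr u v (TmT.m (wApp u (.al t1)) t2)
          = ([], .mL (Ev ur vr u v t1).1 (Ev ur vr u v t1).2
              (Ev ur vr u v t2).1 (Ev ur vr u v t2).2) := by
        simp [Ev, Ev_wApp, mkm, hu]
      have e2 : Ev ur vr u v (TmT.m (wApp v (.al t2)) t1)
          = ([], .mL (Ev ur vr u v t1).1 (Ev ur vr u v t1).2
              (Ev ur vr u v t2).1 (Ev ur vr u v t2).2) := by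
        simp [Ev, Ev_wApp, mkm, hvu, hvv]
      rw [e1, e2]
      exact ⟨.refl _, PEq.refl _ _ _⟩

/-- The payload of the image of a `T0`-term. -/
def phi {n : ℕ} : Tm0 n → P0 N n
  | .var i => .var i
  | .l a b => .mL [] (phi a) [] (phi b)
  | .r a b => .mL [] (phi b) [] (phi a)
  | .m a b => .mfree [] (phi a) [] (phi b)

theorem Ev_ITerm (hne : ¬ MonProv ur vr u v) {n : ℕ} (s : Tm0 n) :
    Ev ur vr u v (ITerm u v s) = ([], phi s) := by
  have hu : MonProv ur vr u u := .refl u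
  have hvu : ¬ MonProv ur vr v u := fun h => hne h.symm
  have hvv : MonProv ur vr v v := .refl v
  induction s with
  | var i => simp [ITerm, Ev, phi]
  | l a b iha ihb => simp [ITerm, Ev, Ev_wApp, iha, ihb, mkm, phi, hu]
  | r a b iha ihb => simp [ITerm, Ev, Ev_wApp, iha, ihb, mkm, phi, hvu, hvv]
  | m a b iha ihb =>
      have hm : mkm ur vr u v [] (phi a) [] (phi b)
          = ([], .mfree [] (phi a) [] (phi b)) := by
        cases a <;> simp [phi, mkm]
      simp [ITerm, Ev, iha, ihb, hm, phi]

/-- Readback: equivalent image payloads come from `Prov0`-provably equal terms. -/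
theorem phi_inj {n : ℕ} (s : Tm0 n) : ∀ s' : Tm0 n,
    PEq ur vr (phi s) (phi s') → Prov0 s s' := by
  induction s with
  | var i =>
      intro s' h
      cases s' <;> simp only [phi] at h <;> cases h
      exact .refl _
  | l a b iha ihb =>
      intro s' h
      cases s' with
      | var i => simp only [phi] at h; cases h
      | l a' b' =>
          simp only [phi] at h
          cases h with
          | mL _ h1 _ h2 => exact .congl (iha _ h1) (ihb _ h2)
      | r a' b' =>
          simp only [phi] at h
          cases h with
          | mL _ h1 _ h2 =>
              exact .trans (.congl (iha _ h1) (ihb _ h2)) (.ax b' a')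
      | m a' b' => simp only [phi] at h; cases h
  | r a b iha ihb =>
      intro s' h
      cases s' with
      | var i => simp only [phi] at h; cases h
      | l a' b' =>
          simp only [phi] at h
          cases h with
          | mL _ h1 _ h2 =>
              exact .trans (.congr_ (iha _ h2) (ihb _ h1)) (Prov0.ax a' b').symm
      | r a' b' =>
          simp only [phi] at h
          cases h with
          | mL _ h1 _ h2 => exact .congr_ (iha _ h2) (ihb _ h1)
      | m a' b' => simp only [phi] at h; cases h
  | m a b iha ihb =>
      intro s' h
      cases s' with
      | var i => simp only [phi] at h; cases h
      | l a' b' => simp only [phi] at h; cases h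
      | r a' b' => simp only [phi] at h; cases h
      | m a' b' =>
          simp only [phi] at h
          cases h with
          | mfree _ h1 _ h2 => exact .congm (iha _ h1) (ihb _ h2)

end Model

/-- The interpretation `I : T0 → T` is conservative if and only if the
word problem instance fails, i.e. iff the monoid presentation does not prove `u = v`. -/
theorem I_conservative_iff {N M : ℕ} (ur vr : Fin M → List (Fin N)) (u v : List (Fin N)) :
    (∀ (n : ℕ) (s s' : Tm0 n),
        ProvT M ur vr u v (ITerm u v s) (ITerm u v s') → Prov0 s s') ↔
      ¬ MonProv ur vr u v := by
  
  constructor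
  · intro hcons hmon
    have hp : ProvT M ur vr u v (ITerm u v (Tm0.l (.var (0 : Fin 2)) (.var 1)))
        (ITerm u v (Tm0.r (.var (0 : Fin 2)) (.var 1))) := by
      simp only [ITerm]
      exact ProvT.congm (MonProv_ProvT hmon _) (ProvT.refl _)
    have h0 : Prov0 (Tm0.l (.var (0 : Fin 2)) (.var 1)) (Tm0.r (.var (0 : Fin 2)) (.var 1)) :=
      hcons 2 _ _ hp
    have := ev0_eq h0
    simp [ev0] at this
  · intro hne n s s' h
    have hE := Ev_sound ur vr u v hne h
    rw [Ev_ITerm ur vr u v hne s, Ev_ITerm ur vr u v hne s'] at hE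
    exact phi_inj ur vr s s' hE.2
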